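/- arXiv:2603.20158 — 6 statements merged into one kernel-verified Lean document; each statement's English description precedes it below -/
import Mathlib

section
/- For ℓ a natural number with ℓ ≥ 4, the number cos²(π/ℓ) is rational if and only if ℓ = 4 or ℓ = 6. -/
open Real

lemma exp_int_integral (z : ℂ) (n : ℕ) (hn : 0 < n) (hz : z ^ n = 1) : IsIntegral ℤ z := by
  refine ⟨Polynomial.X ^ n - 1, ?_, ?_⟩
  · simpa using Polynomial.monic_X_pow_sub_C (1 : ℤ) hn.ne'
  · simp [hz]

theorem cos_sq_pi_div_rational_iff (ℓ : ℕ) (hℓ : 4 ≤ ℓ) :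
    (∃ q : ℚ, (Real.cos (Real.pi / ℓ)) ^ 2 = (q : ℝ)) ↔ ℓ = 4 ∨ ℓ = 6 := by
  have hπ := Real.pi_pos
  have hℓ0 : (0:ℝ) < (ℓ:ℝ) := by positivity
  constructor
  · rintro ⟨q, hq⟩
    set θ : ℝ := 2 * π / ℓ with hθ
    have hcosθ : Real.cos θ = 2 * q - 1 := by
      have := Real.cos_sq (π / ℓ)
      have h2 : 2 * (π / ℓ) = θ := by rw [hθ]; ring
      rw [h2, hq] at this
      linarith
    -- θ ∈ (0, π/2]
    have hθpos : 0 < θ := by positivity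
    have hθle : θ ≤ π / 2 := by
      rw [hθ, div_le_div_iff₀ hℓ0 (by norm_num)]
      have : (4:ℝ) ≤ (ℓ:ℝ) := by exact_mod_cast hℓ
      nlinarith
    have hθltπ : θ < π := lt_of_le_of_lt hθle (by linarith)
    -- 2 cos θ is an algebraic integer
    have hζ : IsIntegral ℤ (Complex.exp (θ * Complex.I)) := by
      refine exp_int_integral _ ℓ (by omega) ?_
      rw [← Complex.exp_nat_mul]
      have : (ℓ : ℂ) * (θ * Complex.I) = 2 * π * Complex.I := by
        have hne : (ℓ:ℂ) ≠ 0 := by exact_mod_cast hℓ0.ne'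
        rw [hθ]
        push_cast
        field_simp
      rw [this, Complex.exp_two_pi_mul_I]
    have hζ' : IsIntegral ℤ (Complex.exp (-θ * Complex.I)) := by
      refine exp_int_integral _ ℓ (by omega) ?_
      rw [← Complex.exp_nat_mul]
      have : (ℓ : ℂ) * (-θ * Complex.I) = -(2 * π * Complex.I) := by
        have hne : (ℓ:ℂ) ≠ 0 := by exact_mod_cast hℓ0.ne'
        rw [hθ]
        push_cast
        field_simp
      rw [this, Complex.exp_neg, Complex.exp_two_pi_mul_I, inv_one]
    have hsum : IsIntegral ℤ ((Complex.exp (θ * Complex.I)) + Complex.exp (-θ * Complex.I)) :=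
      hζ.add hζ'
    have hsum_eq : (Complex.exp (θ * Complex.I)) + Complex.exp (-θ * Complex.I)
        = ((4 * q - 2 : ℚ) : ℂ) := by
      have h1 : (Complex.exp (θ * Complex.I)) + Complex.exp (-θ * Complex.I)
          = 2 * Complex.cos θ := by
        rw [Complex.cos]
        push_cast
        ring
      rw [h1, ← Complex.ofReal_cos, hcosθ]
      push_cast
      ring
    rw [hsum_eq] at hsum
    have hratint : IsIntegral ℤ (4 * q - 2 : ℚ) := by
      rwa [show ((4 * q - 2 : ℚ) : ℂ) = algebraMap ℚ ℂ (4 * q - 2 : ℚ) from rfl,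
        isIntegral_algebraMap_iff (algebraMap ℚ ℂ).injective] at hsum
    obtain ⟨m, hm⟩ := IsIntegrallyClosed.isIntegral_iff.mp hratint
    -- m = 2 cos θ ∈ [0, 2)
    have hmQ : (m:ℚ) = 4*q-2 := by exact_mod_cast hm
    have hmR : (m : ℝ) = 2 * Real.cos θ := by
      have : ((m:ℚ):ℝ) = ((4*q-2 : ℚ):ℝ) := by exact_mod_cast hmQ
      push_cast at this
      rw [hcosθ]; linarith
    have hcos0 : 0 ≤ Real.cos θ := Real.cos_nonneg_of_mem_Icc ⟨by linarith, hθle⟩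
    have hcos1 : Real.cos θ < 1 := by
      calc Real.cos θ < Real.cos 0 := by
            exact Real.cos_lt_cos_of_nonneg_of_le_pi le_rfl hθltπ.le hθpos
        _ = 1 := Real.cos_zero
    have hm0 : 0 ≤ m := by exact_mod_cast (by nlinarith : (0:ℝ) ≤ (m:ℝ))
    have hm2 : m < 2 := by exact_mod_cast (by nlinarith : (m:ℝ) < 2)
    interval_cases m
    · -- cos θ = 0, θ = π/2, ℓ = 4
      left
      have hc : Real.cos θ = Real.cos (π/2) := by
        norm_num at hmR
        rw [Real.cos_pi_div_two]; linarith
      have hθeq : θ = π / 2 := Real.injOn_cos ⟨hθpos.le, hθltπ.le⟩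
        ⟨by linarith, by linarith⟩ hc
      have : (ℓ : ℝ) = 4 := by
        rw [hθ] at hθeq
        field_simp at hθeq
        nlinarith
      exact_mod_cast this
    · -- cos θ = 1/2, θ = π/3, ℓ = 6
      right
      have hc : Real.cos θ = Real.cos (π/3) := by
        norm_num at hmR
        rw [Real.cos_pi_div_three]; linarith
      have hθeq : θ = π / 3 := Real.injOn_cos ⟨hθpos.le, hθltπ.le⟩
        ⟨by linarith, by linarith⟩ hc
      have : (ℓ : ℝ) = 6 := by
        rw [hθ] at hθeq
        field_simp at hθeq
        nlinarith
      exact_mod_cast this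
  · rintro (rfl | rfl)
    · refine ⟨1/2, ?_⟩
      rw [show ((4:ℕ):ℝ) = 4 by norm_num, Real.cos_pi_div_four, div_pow,
        Real.sq_sqrt (by norm_num : (0:ℝ) ≤ 2)]
      norm_num
    · refine ⟨3/4, ?_⟩
      rw [show ((6:ℕ):ℝ) = 6 by norm_num, Real.sq_cos_pi_div_six]
      norm_num
end

section
/- Let d ≥ 2 and let U be a unitary on a Hilbert space with U^d = 1 and suppose two copies U_1, U_2 satisfy U_1 U_2 = ξ² U_2 U_1 with ξ a primitive (2d or d)-th root of unity as above. Then G := d^{-1/2} Σ_{k=0}^{d-1} ξ^{k²} U^k is unitary. -/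
open Matrix Kronecker Complex

/-- The algebra `M_d ⊗ M_d` realized as matrices indexed by pairs. -/
abbrev MM (d : ℕ) := Matrix (Fin d × Fin d) (Fin d × Fin d) ℂ

/-- `R ⊗ 1` acting on the triple tensor product `ℂ^d ⊗ ℂ^d ⊗ ℂ^d`. -/
def amp1 {d : ℕ} (R : MM d) :
    Matrix (Fin d × Fin d × Fin d) (Fin d × Fin d × Fin d) ℂ :=
  Matrix.of fun x y => R (x.1, x.2.1) (y.1, y.2.1) * (if x.2.2 = y.2.2 then 1 else 0)

/-- `1 ⊗ R` acting on the triple tensor product `ℂ^d ⊗ ℂ^d ⊗ ℂ^d`. -/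
def amp2 {d : ℕ} (R : MM d) :
    Matrix (Fin d × Fin d × Fin d) (Fin d × Fin d × Fin d) ℂ :=
  Matrix.of fun x y => (if x.1 = y.1 then 1 else 0) * R (x.2.1, x.2.2) (y.2.1, y.2.2)

/-- The Yang-Baxter equation `(R⊗1)(1⊗R)(R⊗1) = (1⊗R)(R⊗1)(1⊗R)`. -/
def YBE {d : ℕ} (R : MM d) : Prop :=
  amp1 R * amp2 R * amp1 R = amp2 R * amp1 R * amp2 R

/-- The root of unity `ξ`: `e^{2πi/d}` for `d` odd, `e^{πi/d}` for `d` even. -/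
noncomputable def xi (d : ℕ) : ℂ :=
  if Odd d then Complex.exp (2 * Real.pi * Complex.I / d)
  else Complex.exp (Real.pi * Complex.I / d)

/-- The unitary `U` on `ℂ^d ⊗ ℂ^d` with `U(e_k ⊗ e_l) = ξ^{l-k} e_{k+1} ⊗ e_{l+1}`,
indices mod `d`. -/
noncomputable def Ug (d : ℕ) [NeZero d] : MM d :=
  Matrix.of fun p q =>
    if p.1 = q.1 + 1 ∧ p.2 = q.2 + 1 then xi d ^ ((q.2 : ℤ) - (q.1 : ℤ)) else 0

/-- The Gaussian R-matrix `G_d = d^{-1/2} Σ_k ξ^{k²} U^k`. -/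
noncomputable def Gg (d : ℕ) [NeZero d] : MM d :=
  ((Real.sqrt d : ℂ))⁻¹ • ∑ k ∈ Finset.range d, xi d ^ (k ^ 2) • Ug d ^ k

lemma xi_ne_zero (d : ℕ) : xi d ≠ 0 := by
  unfold xi; split_ifs <;> exact Complex.exp_ne_zero _

lemma xi_pow_two_mul (d : ℕ) (hd : d ≠ 0) : xi d ^ (2 * d) = 1 := by
  have hd' : (d:ℂ) ≠ 0 := Nat.cast_ne_zero.mpr hd
  unfold xi; split_ifs with h
  · rw [← Complex.exp_nat_mul]
    rw [show ((2*d : ℕ):ℂ) * (2 * Real.pi * Complex.I / d) = (2:ℤ) * (2 * Real.pi * Complex.I) by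
      push_cast; field_simp]
    exact Complex.exp_int_mul_two_pi_mul_I 2
  · rw [← Complex.exp_nat_mul]
    rw [show ((2*d : ℕ):ℂ) * (Real.pi * Complex.I / d) = (1:ℤ) * (2 * Real.pi * Complex.I) by
      push_cast; field_simp]
    exact Complex.exp_int_mul_two_pi_mul_I 1

lemma xi_pow_d_sq (d : ℕ) (hd : d ≠ 0) : xi d ^ (d ^ 2) = 1 := by
  have hd' : (d:ℂ) ≠ 0 := Nat.cast_ne_zero.mpr hd
  unfold xi; split_ifs with h
  · rw [← Complex.exp_nat_mul]
    rw [show ((d^2 : ℕ):ℂ) * (2 * Real.pi * Complex.I / d) = (d:ℤ) * (2 * Real.pi * Complex.I) by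
      push_cast; field_simp]
    exact Complex.exp_int_mul_two_pi_mul_I d
  · obtain ⟨c, hc⟩ := Nat.not_odd_iff_even.mp h
    have hc0 : (c:ℂ) ≠ 0 := by
      intro h0; apply hd; rw [hc]; norm_cast at h0; omega
    rw [← Complex.exp_nat_mul]
    rw [show ((d^2 : ℕ):ℂ) * (Real.pi * Complex.I / d) = (c:ℤ) * (2 * Real.pi * Complex.I) by
      have h1 : ((d^2 : ℕ):ℂ) * (Real.pi * Complex.I / d) = (d:ℂ) * (Real.pi * Complex.I) := by
        push_cast; field_simp
      rw [h1, hc]; push_cast; ring]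
    exact Complex.exp_int_mul_two_pi_mul_I c

lemma conj_xi (d : ℕ) : (starRingEnd ℂ) (xi d) = (xi d)⁻¹ := by
  unfold xi; split_ifs <;>
  · rw [← Complex.exp_conj, ← Complex.exp_neg]
    congr 1
    simp [map_div₀, _root_.map_mul, map_ofNat, Complex.conj_I, Complex.conj_ofReal]
    ring

lemma xi_pow_sq_mod (d : ℕ) (hd : d ≠ 0) (a : ℕ) :
    xi d ^ (a ^ 2) = xi d ^ ((a % d) ^ 2) := by
  conv_lhs => rw [← Nat.mod_add_div a d]
  rw [show (a % d + d * (a / d)) ^ 2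
      = (a % d)^2 + ((2*d) * ((a % d)*(a / d)) + (d^2) * (a / d)^2) by ring]
  rw [pow_add, pow_add, pow_mul (xi d) (2*d), xi_pow_two_mul d hd, one_pow,
    pow_mul (xi d) (d^2), xi_pow_d_sq d hd, one_pow, mul_one, mul_one]

lemma xi_sq_prim (d : ℕ) (hd : d ≠ 0) : IsPrimitiveRoot (xi d ^ 2) d := by
  unfold xi; split_ifs with h
  · exact (Complex.isPrimitiveRoot_exp d hd).pow_of_coprime 2 (Nat.coprime_two_left.mpr h)
  · have h2 : Complex.exp (Real.pi * Complex.I / d) ^ 2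
        = Complex.exp (2 * Real.pi * Complex.I / d) := by
      rw [sq, ← Complex.exp_add]; congr 1; ring
    rw [h2]; exact Complex.isPrimitiveRoot_exp d hd

lemma sum_range_eq_sum_zmod {d : ℕ} [NeZero d] {β : Type*} [AddCommMonoid β] (f : ℕ → β) :
    ∑ k ∈ Finset.range d, f k = ∑ k : ZMod d, f (ZMod.val k) := by
  refine Finset.sum_nbij' (fun k => (k : ZMod d)) (fun k => ZMod.val k) ?_ ?_ ?_ ?_ ?_
  · intro a ha; exact Finset.mem_univ _
  · intro a ha; exact Finset.mem_range.mpr (ZMod.val_lt a)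
  · intro a ha; exact ZMod.val_natCast_of_lt (Finset.mem_range.mp ha)
  · intro a ha; exact ZMod.natCast_zmod_val a
  · intro a ha; rw [ZMod.val_natCast_of_lt (Finset.mem_range.mp ha)]


/-- If `U` is a unitary on `ℂ^d ⊗ ℂ^d` with `U^d = 1` whose two copies satisfy the exchange
relation `U₁ U₂ = ξ² U₂ U₁`, then `G = d^{-1/2} Σ_{k=0}^{d-1} ξ^{k²} U^k` is unitary. -/
theorem gaussian_unitary (d : ℕ) (hd : 2 ≤ d) (U : MM d)
    (hU : U ∈ Matrix.unitaryGroup (Fin d × Fin d) ℂ)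
    (hUd : U ^ d = 1)
    (hexch : amp1 U * amp2 U = xi d ^ 2 • (amp2 U * amp1 U)) :
    ((Real.sqrt d : ℂ))⁻¹ • ∑ k ∈ Finset.range d, xi d ^ (k ^ 2) • U ^ k
      ∈ Matrix.unitaryGroup (Fin d × Fin d) ℂ := by
  haveI : NeZero d := ⟨by omega⟩
  have hd0 : d ≠ 0 := by omega
  have hene : xi d ≠ 0 := xi_ne_zero d
  have hpU : ∀ n : ℕ, U ^ n * star (U ^ n) = 1 := fun n =>
    Matrix.mem_unitaryGroup_iff.mp (pow_mem hU n)
  have hpowmod : ∀ n : ℕ, U ^ n = U ^ (n % d) := by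
    intro n
    conv_lhs => rw [← Nat.mod_add_div n d]
    rw [pow_add, pow_mul, hUd, one_pow, mul_one]
  rw [Matrix.mem_unitaryGroup_iff]
  rw [star_smul, star_sum]
  have hsconj : star (((Real.sqrt d : ℝ) : ℂ))⁻¹ = (((Real.sqrt d : ℝ) : ℂ))⁻¹ := by
    simp [Complex.star_def, Complex.conj_ofReal]
  rw [hsconj, smul_mul_smul_comm]
  have hs : (((Real.sqrt d : ℝ) : ℂ))⁻¹ * (((Real.sqrt d : ℝ) : ℂ))⁻¹ = ((d:ℕ):ℂ)⁻¹ := by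
    rw [← mul_inv, ← Complex.ofReal_mul, Real.mul_self_sqrt (Nat.cast_nonneg d),
      Complex.ofReal_natCast]
  rw [hs]
  have key : (∑ k ∈ Finset.range d, xi d ^ (k ^ 2) • U ^ k)
      * (∑ k ∈ Finset.range d, star (xi d ^ (k ^ 2) • U ^ k)) = (d:ℂ) • (1 : MM d) := by
    simp only [star_smul, Complex.star_def]
    rw [Finset.sum_mul_sum]
    simp only [smul_mul_smul_comm]
    rw [sum_range_eq_sum_zmod
      (fun a => ∑ j ∈ Finset.range d,
        (xi d ^ (a ^ 2) * (starRingEnd ℂ) (xi d ^ (j ^ 2))) • (U ^ a * star (U ^ j)))]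
    have hinner : ∀ a : ZMod d,
        (∑ j ∈ Finset.range d,
          (xi d ^ (a.val ^ 2) * (starRingEnd ℂ) (xi d ^ (j ^ 2))) • (U ^ a.val * star (U ^ j)))
        = ∑ b : ZMod d,
          (xi d ^ (a.val ^ 2) * (starRingEnd ℂ) (xi d ^ (b.val ^ 2)))
            • (U ^ a.val * star (U ^ b.val)) := fun a =>
      sum_range_eq_sum_zmod _
    rw [Finset.sum_congr rfl (fun a _ => hinner a), Finset.sum_comm]
    -- now ∑ b, ∑ a, F a b ; reindex a = b + m
    have hre : ∀ b : ZMod d,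
        (∑ a : ZMod d,
          (xi d ^ (a.val ^ 2) * (starRingEnd ℂ) (xi d ^ (b.val ^ 2)))
            • (U ^ a.val * star (U ^ b.val)))
        = ∑ m : ZMod d,
          (xi d ^ ((b + m).val ^ 2) * (starRingEnd ℂ) (xi d ^ (b.val ^ 2)))
            • (U ^ (b + m).val * star (U ^ b.val)) := by
      intro b
      exact (Fintype.sum_equiv (Equiv.addLeft b)
        (fun m => (xi d ^ ((b + m).val ^ 2) * (starRingEnd ℂ) (xi d ^ (b.val ^ 2)))
            • (U ^ (b + m).val * star (U ^ b.val)))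
        (fun a => (xi d ^ (a.val ^ 2) * (starRingEnd ℂ) (xi d ^ (b.val ^ 2)))
            • (U ^ a.val * star (U ^ b.val)))
        (fun m => rfl)).symm
    rw [Finset.sum_congr rfl (fun b _ => hre b), Finset.sum_comm]
    -- term simplification
    have hterm : ∀ m b : ZMod d,
        (xi d ^ ((b + m).val ^ 2) * (starRingEnd ℂ) (xi d ^ (b.val ^ 2)))
            • (U ^ (b + m).val * star (U ^ b.val))
        = (xi d ^ (m.val ^ 2) * (xi d ^ 2) ^ (m.val * b.val)) • U ^ m.val := by
      intro m b
      have hmat : U ^ (b + m).val * star (U ^ b.val) = U ^ m.val := by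
        rw [ZMod.val_add, ← hpowmod,
          show b.val + m.val = m.val + b.val from Nat.add_comm _ _,
          pow_add, mul_assoc, hpU, mul_one]
      have hsc : xi d ^ ((b + m).val ^ 2) * (starRingEnd ℂ) (xi d ^ (b.val ^ 2))
          = xi d ^ (m.val ^ 2) * (xi d ^ 2) ^ (m.val * b.val) := by
        rw [map_pow, conj_xi, ZMod.val_add, ← xi_pow_sq_mod d hd0,
          show (b.val + m.val) ^ 2 = b.val ^ 2 + (m.val ^ 2 + 2 * (m.val * b.val)) by ring,
          pow_add, pow_add, pow_mul, inv_pow]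
        field_simp
      rw [hmat, hsc]
    simp only [hterm]
    -- sum over b : geometric sum
    have hgeo : ∀ m : ZMod d,
        (∑ b : ZMod d, (xi d ^ 2) ^ (m.val * b.val)) = if m = 0 then (d:ℂ) else 0 := by
      intro m
      rw [← sum_range_eq_sum_zmod (fun B => (xi d ^ 2) ^ (m.val * B))]
      simp only [pow_mul]
      by_cases hm : m = 0
      · simp [hm]
      · have hM0 : m.val ≠ 0 := fun h => hm ((ZMod.val_eq_zero m).mp h)
        have hx1 : ((xi d ^ 2) ^ m.val) ≠ 1 := by
          intro h1
          have hdvd := ((xi_sq_prim d hd0).pow_eq_one_iff_dvd m.val).mp h1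
          have := Nat.le_of_dvd (Nat.pos_of_ne_zero hM0) hdvd
          have := ZMod.val_lt m
          omega
        have hxd : (((xi d ^ 2) ^ m.val)) ^ d = 1 := by
          rw [← pow_mul, mul_comm, pow_mul, (xi_sq_prim d hd0).pow_eq_one, one_pow]
        rw [geom_sum_eq hx1, hxd, if_neg hm]
        simp
    have hcollect : ∀ m : ZMod d,
        (∑ b : ZMod d, (xi d ^ (m.val ^ 2) * (xi d ^ 2) ^ (m.val * b.val)) • U ^ m.val)
        = (xi d ^ (m.val ^ 2) * (if m = 0 then (d:ℂ) else 0)) • U ^ m.val := by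
      intro m
      rw [← Finset.sum_smul, ← Finset.mul_sum, hgeo m]
    simp only [hcollect]
    rw [Fintype.sum_eq_single (0 : ZMod d)]
    · simp
    · intro m hm
      rw [if_neg hm, mul_zero, zero_smul]
  have hdC : ((d:ℕ):ℂ) ≠ 0 := Nat.cast_ne_zero.mpr hd0
  rw [key, smul_smul, inv_mul_cancel₀ hdC, one_smul]
end

section
/- The Gaussian R-matrix G_d = d^{-1/2} Σ_{k=0}^{d-1} ξ^{k²} U^k satisfies the Yang-Baxter equation (G_d ⊗ 1)(1 ⊗ G_d)(G_d ⊗ 1) = (1 ⊗ G_d)(G_d ⊗ 1)(1 ⊗ G_d) on (ℂ^d)^{⊗3}. -/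
open Matrix Kronecker Complex

set_option linter.unusedSectionVars false

namespace GaussYBE

variable (d : ℕ) [NeZero d]

open Fin.NatCast

lemma xi_ne : xi d ≠ 0 := by
  unfold xi; split_ifs <;> exact Complex.exp_ne_zero _

lemma dC_ne : (d : ℂ) ≠ 0 := Nat.cast_ne_zero.mpr (NeZero.ne d)

lemma xi_pow_two_d : xi d ^ (2 * (d : ℤ)) = 1 := by
  unfold xi
  split_ifs with h
  · rw [← Complex.exp_int_mul]
    rw [show ((2 * (d:ℤ) : ℤ) : ℂ) * (2 * Real.pi * Complex.I / d)
        = (2 : ℤ) * (2 * Real.pi * Complex.I) by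
      push_cast; field_simp [dC_ne d]]
    exact Complex.exp_int_mul_two_pi_mul_I 2
  · rw [← Complex.exp_int_mul]
    rw [show ((2 * (d:ℤ) : ℤ) : ℂ) * (Real.pi * Complex.I / d)
        = (1 : ℤ) * (2 * Real.pi * Complex.I) by
      push_cast; field_simp [dC_ne d]]
    exact Complex.exp_int_mul_two_pi_mul_I 1

lemma xi_pow_d_odd (h : Odd d) : xi d ^ ((d : ℤ)) = 1 := by
  unfold xi
  rw [if_pos h, ← Complex.exp_int_mul]
  rw [show ((d:ℤ) : ℂ) * (2 * Real.pi * Complex.I / d)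
      = (1 : ℤ) * (2 * Real.pi * Complex.I) by
    push_cast; field_simp [dC_ne d]]
  exact Complex.exp_int_mul_two_pi_mul_I 1

/-- The key scalar congruence: the coefficient identity for the Yang–Baxter matching. -/
lemma key_int (i j k e1 e2 e3 : ℤ) :
    xi d ^ ((i + j - d * e1) ^ 2 + (i + k - d * e2) ^ 2 + (-i + d * e3) ^ 2
      + 2 * (i + k - d * e2) * (-i + d * e3))
    = xi d ^ (i ^ 2 + j ^ 2 + k ^ 2 + 2 * i * j) := by
  have hne := xi_ne d
  rcases Nat.even_or_odd d with he | ho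
  · obtain ⟨f, hf⟩ := he
    have hfz : (d : ℤ) = 2 * f := by exact_mod_cast (by omega : d = 2 * f)
    have key : (i + j - (d:ℤ) * e1) ^ 2 + (i + k - d * e2) ^ 2 + (-i + d * e3) ^ 2
        + 2 * (i + k - d * e2) * (-i + d * e3)
        = (i ^ 2 + j ^ 2 + k ^ 2 + 2 * i * j)
          + (2 * (d:ℤ)) * ((f : ℤ) * (e1 ^ 2 + e2 ^ 2 + e3 ^ 2) - (i + j) * e1
            - (i + k) * e2 - i * e3 + (i + k) * e3 - 2 * f * e2 * e3 + e2 * i) := by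
      rw [hfz]; ring
    rw [key, zpow_add₀ hne, _root_.zpow_mul, xi_pow_two_d, _root_.one_zpow, mul_one]
  · have key : (i + j - (d:ℤ) * e1) ^ 2 + (i + k - d * e2) ^ 2 + (-i + d * e3) ^ 2
        + 2 * (i + k - d * e2) * (-i + d * e3)
        = (i ^ 2 + j ^ 2 + k ^ 2 + 2 * i * j)
          + (d : ℤ) * ((d:ℤ) * e1 ^ 2 - 2 * (i + j) * e1 + d * e2 ^ 2 - 2 * (i + k) * e2
            + d * e3 ^ 2 - 2 * i * e3 + 2 * (i + k) * e3 - 2 * d * e2 * e3 + 2 * e2 * i) := by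
      ring
    rw [key, zpow_add₀ hne, _root_.zpow_mul, xi_pow_d_odd d ho, _root_.one_zpow, mul_one]

/-- The ℕ-valued coefficient identity after mod-`d` reduction of the indices. -/
lemma key_coeff (i j k : ℕ) (hi : i < d) (hj : j < d) (hk : k < d) :
    xi d ^ (((i + j) % d) ^ 2 + ((i + k) % d) ^ 2 + ((d - i) % d) ^ 2
      + 2 * ((i + k) % d) * ((d - i) % d))
    = xi d ^ (i ^ 2 + j ^ 2 + k ^ 2 + 2 * i * j) := by
  set a := (i + j) % d with ha
  set b := (i + k) % d with hb
  set c := (d - i) % d with hc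
  set q1 := (i + j) / d with hq1
  set q2 := (i + k) / d with hq2
  set q3 := (d - i) / d with hq3
  have h1' : ((a : ℕ) : ℤ) + d * (q1 : ℤ) = (i : ℤ) + j := by
    have h' := congrArg (Nat.cast (R := ℤ)) (Nat.mod_add_div (i + j) d)
    rwa [Nat.cast_add, Nat.cast_mul, Nat.cast_add] at h'
  have h2' : ((b : ℕ) : ℤ) + d * (q2 : ℤ) = (i : ℤ) + k := by
    have h' := congrArg (Nat.cast (R := ℤ)) (Nat.mod_add_div (i + k) d)
    rwa [Nat.cast_add, Nat.cast_mul, Nat.cast_add] at h'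
  have h3' : ((c : ℕ) : ℤ) + d * (q3 : ℤ) = (d : ℤ) - i := by
    have h' := congrArg (Nat.cast (R := ℤ)) (Nat.mod_add_div (d - i) d)
    rwa [Nat.cast_add, Nat.cast_mul, Nat.cast_sub hi.le] at h'
  have h1 : ((a : ℕ) : ℤ) = (i : ℤ) + j - d * (q1 : ℤ) := by linarith
  have h2 : ((b : ℕ) : ℤ) = (i : ℤ) + k - d * (q2 : ℤ) := by linarith
  have h3 : ((c : ℕ) : ℤ) = -(i : ℤ) + d * (1 - (q3 : ℤ)) := by
    have expand : (d : ℤ) * (1 - (q3 : ℤ)) = (d : ℤ) - d * (q3 : ℤ) := by ring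
    rw [expand]; linarith
  have conv1 : ∀ n : ℕ, xi d ^ n = xi d ^ (n : ℤ) := fun n => (zpow_natCast _ n).symm
  rw [conv1, conv1]
  have main := key_int d i j k (q1 : ℤ) (q2 : ℤ) (1 - (q3 : ℤ))
  rw [show ((a ^ 2 + b ^ 2 + c ^ 2 + 2 * b * c : ℕ) : ℤ)
      = ((i:ℤ) + j - d * (q1 : ℤ)) ^ 2 + ((i:ℤ) + k - d * (q2 : ℤ)) ^ 2
        + (-(i:ℤ) + d * (1 - (q3 : ℤ))) ^ 2
        + 2 * ((i:ℤ) + k - d * (q2 : ℤ)) * (-(i:ℤ) + d * (1 - (q3 : ℤ))) by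
    push_cast
    rw [h1, h2, h3]]
  rw [main]
  norm_cast

/-! ### Shift matrices and the Kronecker factorization of `U` -/

noncomputable def sh (f : Fin d → ℂ) : Matrix (Fin d) (Fin d) ℂ :=
  Matrix.of fun i j => if i = j + 1 then f j else 0

lemma sh_pow (f : Fin d → ℂ) (k : ℕ) :
    sh d f ^ k = Matrix.of fun i j =>
      if i = j + (k : Fin d) then ∏ t ∈ Finset.range k, f (j + (t : Fin d)) else 0 := by
  induction k with
  | zero =>
    rw [pow_zero]; ext i j
    simp [Matrix.one_apply]
  | succ k ih =>
    rw [pow_succ', ih]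
    ext i j
    rw [Matrix.mul_apply, Finset.sum_eq_single (j + (k : Fin d))]
    · have hcast : ((k + 1 : ℕ) : Fin d) = (k : Fin d) + 1 := by push_cast; ring
      simp only [sh, Matrix.of_apply, if_pos rfl, hcast, ← add_assoc, Finset.prod_range_succ]
      split_ifs with h
      · ring
      · simp
    · intro r _ hr
      simp [sh, hr]
    · intro h; exact absurd (Finset.mem_univ _) h

lemma sh_mul (f g : Fin d → ℂ) : sh d f * sh d g
    = Matrix.of fun i j => if i = j + 1 + 1 then f (j + 1) * g j else 0 := by
  ext i j
  rw [Matrix.mul_apply, Finset.sum_eq_single (j + 1)]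
  · simp only [sh, Matrix.of_apply, if_pos rfl]
    split_ifs with h
    · rfl
    · simp
  · intro r _ hr
    simp [sh, hr]
  · intro h; exact absurd (Finset.mem_univ _) h

lemma sh_pow_d (f : Fin d → ℂ) : sh d f ^ d = (∏ x : Fin d, f x) • 1 := by
  rw [sh_pow]
  ext i j
  have hprod : ∏ t ∈ Finset.range d, f (j + (t : Fin d)) = ∏ x : Fin d, f x := by
    rw [← Fin.prod_univ_eq_prod_range (fun t : ℕ => f (j + (t : Fin d))) d]
    simp only [Fin.cast_val_eq_self]
    simpa using Equiv.prod_comp (Equiv.addLeft j) f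
  simp only [Matrix.of_apply, Fin.natCast_self, add_zero, hprod, Matrix.smul_apply,
    Matrix.one_apply, smul_eq_mul]
  split_ifs <;> simp

noncomputable def sA : Matrix (Fin d) (Fin d) ℂ := sh d fun j => xi d ^ (-((j : ℕ) : ℤ))
noncomputable def sB : Matrix (Fin d) (Fin d) ℂ := sh d fun j => xi d ^ (((j : ℕ) : ℤ))

lemma Ug_eq : Ug d = sA d ⊗ₖ sB d := by
  ext p q
  simp only [Ug, sA, sB, sh, Matrix.of_apply, Matrix.kroneckerMap_apply]
  by_cases h1 : p.1 = q.1 + 1 <;> by_cases h2 : p.2 = q.2 + 1 <;>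
    simp only [h1, h2, if_pos, if_neg, and_true, and_false, false_and, if_true, if_false,
      eq_self_iff_true, true_and, mul_zero, zero_mul] <;> try simp [h1, h2]
  · rw [show (q.2 : ℤ) - q.1 = -(q.1 : ℤ) + q.2 by ring, zpow_add₀ (xi_ne d), _root_.zpow_neg]
    norm_cast

lemma kron_pow (A B : Matrix (Fin d) (Fin d) ℂ) (n : ℕ) :
    (A ⊗ₖ B) ^ n = (A ^ n) ⊗ₖ (B ^ n) := by
  induction n with
  | zero => simp [Matrix.one_kronecker_one]
  | succ n ih => rw [pow_succ, pow_succ, pow_succ, ih, Matrix.mul_kronecker_mul]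

lemma Ug_pow_d : Ug d ^ d = 1 := by
  rw [Ug_eq, kron_pow, sA, sB, sh_pow_d, sh_pow_d, Matrix.smul_kronecker,
    Matrix.kronecker_smul, Matrix.one_kronecker_one, smul_smul]
  have hp : (∏ x : Fin d, xi d ^ (-((x:ℕ) : ℤ))) * ∏ x : Fin d, xi d ^ (((x:ℕ) : ℤ)) = 1 := by
    rw [← Finset.prod_mul_distrib]
    refine Finset.prod_eq_one fun x _ => ?_
    rw [← zpow_add₀ (xi_ne d)]; simp
  rw [hp, one_smul]

/-! ### `amp1`, `amp2` as algebra embeddings -/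

def pe : (Fin d × Fin d × Fin d) ≃ ((Fin d × Fin d) × Fin d) :=
  (Equiv.prodAssoc (Fin d) (Fin d) (Fin d)).symm

lemma amp1_eq (R : MM d) :
    amp1 R = (R ⊗ₖ (1 : Matrix (Fin d) (Fin d) ℂ)).submatrix (pe d) (pe d) := by
  ext x y
  simp [amp1, pe, Matrix.one_apply, Equiv.prodAssoc]

lemma amp2_eq (R : MM d) : amp2 R = (1 : Matrix (Fin d) (Fin d) ℂ) ⊗ₖ R := by
  ext x y
  simp [amp2, Matrix.one_apply]

lemma amp1_mul (A B : MM d) : amp1 (A * B) = amp1 A * amp1 B := by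
  rw [amp1_eq, amp1_eq, amp1_eq, Matrix.submatrix_mul_equiv, ← Matrix.mul_kronecker_mul,
    one_mul]

lemma amp2_mul (A B : MM d) : amp2 (A * B) = amp2 A * amp2 B := by
  rw [amp2_eq, amp2_eq, amp2_eq, ← Matrix.mul_kronecker_mul, one_mul]

lemma amp1_one : amp1 (1 : MM d) = 1 := by
  rw [amp1_eq, Matrix.one_kronecker_one, Matrix.submatrix_one_equiv]

lemma amp2_one : amp2 (1 : MM d) = 1 := by
  rw [amp2_eq, Matrix.one_kronecker_one]

lemma amp1_pow (A : MM d) (n : ℕ) : amp1 (A ^ n) = amp1 A ^ n := by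
  induction n with
  | zero => rw [pow_zero, pow_zero, amp1_one]
  | succ n ih => rw [pow_succ, pow_succ, amp1_mul, ih]

lemma amp2_pow (A : MM d) (n : ℕ) : amp2 (A ^ n) = amp2 A ^ n := by
  induction n with
  | zero => rw [pow_zero, pow_zero, amp2_one]
  | succ n ih => rw [pow_succ, pow_succ, amp2_mul, ih]

lemma amp1_smul (c : ℂ) (A : MM d) : amp1 (c • A) = c • amp1 A := by
  ext x y
  simp [amp1, mul_assoc]

lemma amp2_smul (c : ℂ) (A : MM d) : amp2 (c • A) = c • amp2 A := by
  ext x y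
  simp [amp2, mul_assoc]

lemma amp1_sum (s : Finset ℕ) (F : ℕ → MM d) :
    amp1 (∑ k ∈ s, F k) = ∑ k ∈ s, amp1 (F k) := by
  ext x y
  simp [amp1, Matrix.sum_apply, Finset.sum_mul]

lemma amp2_sum (s : Finset ℕ) (F : ℕ → MM d) :
    amp2 (∑ k ∈ s, F k) = ∑ k ∈ s, amp2 (F k) := by
  ext x y
  simp [amp2, Matrix.sum_apply, Finset.mul_sum]

lemma amp2_kron (A B : Matrix (Fin d) (Fin d) ℂ) :
    amp2 (A ⊗ₖ B)
      = (((1 : Matrix (Fin d) (Fin d) ℂ) ⊗ₖ A) ⊗ₖ B).submatrix (pe d) (pe d) := by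
  ext x y
  simp [amp2, pe, Matrix.one_apply, Equiv.prodAssoc, mul_assoc]

/-! ### The commutation relation -/

lemma xi_zpow_congr (s t : ℤ)
    (h : s - t = 0 ∨ s - t = 2 * (d : ℤ) ∨ s - t = -(2 * (d : ℤ))) :
    xi d ^ s = xi d ^ t := by
  have key : xi d ^ s = xi d ^ t * xi d ^ (s - t) := by
    rw [← zpow_add₀ (xi_ne d)]; ring_nf
  rcases h with h | h | h <;> rw [key, h]
  · rw [zpow_zero, mul_one]
  · rw [xi_pow_two_d, mul_one]
  · rw [_root_.zpow_neg, xi_pow_two_d, inv_one, mul_one]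

lemma sBA (hd : 2 ≤ d) : sB d * sA d = (xi d ^ (2 : ℤ)) • (sA d * sB d) := by
  have hv1 : ((1 : Fin d) : ℕ) = 1 := by
    rw [Fin.val_one']; exact Nat.mod_eq_of_lt hd
  rw [sA, sB, sh_mul, sh_mul]
  ext i j
  simp only [Matrix.of_apply, Matrix.smul_apply, smul_eq_mul, mul_ite, mul_zero]
  split_ifs with h
  · rw [← zpow_add₀ (xi_ne d), ← zpow_add₀ (xi_ne d), ← zpow_add₀ (xi_ne d)]
    apply xi_zpow_congr
    have hj : (j : ℕ) < d := j.isLt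
    have hval : ((j + 1 : Fin d) : ℕ) = ((j : ℕ) + 1) % d := by
      rw [Fin.val_add, hv1]
    rcases eq_or_lt_of_le (Nat.succ_le_of_lt hj) with hcase | hcase
    · have : ((j + 1 : Fin d) : ℕ) = 0 := by rw [hval, show (j:ℕ) + 1 = d by omega, Nat.mod_self]
      rw [this]
      right; right
      push_cast
      omega
    · have : ((j + 1 : Fin d) : ℕ) = (j : ℕ) + 1 := by
        rw [hval]; exact Nat.mod_eq_of_lt hcase
      rw [this]
      left
      push_cast
      ring
  · rfl

lemma comm (hd : 2 ≤ d) :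
    amp1 (Ug d) * amp2 (Ug d) = (xi d ^ (2 : ℤ)) • (amp2 (Ug d) * amp1 (Ug d)) := by
  rw [Ug_eq, amp1_eq, amp2_kron, Matrix.submatrix_mul_equiv, Matrix.submatrix_mul_equiv,
    ← Matrix.mul_kronecker_mul, ← Matrix.mul_kronecker_mul, ← Matrix.mul_kronecker_mul,
    ← Matrix.mul_kronecker_mul, sBA d hd]
  simp [Matrix.smul_kronecker, Matrix.kronecker_smul, Matrix.submatrix_smul]

/-! ### Powers mod d and arithmetic helpers -/

lemma pow_mod {I : Type*} [Fintype I] [DecidableEq I] (M : Matrix I I ℂ)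
    (h : M ^ d = 1) (n : ℕ) : M ^ n = M ^ (n % d) := by
  conv_lhs => rw [← Nat.div_add_mod n d]
  rw [pow_add, pow_mul, h, one_pow, one_mul]

lemma dpos : 0 < d := Nat.pos_of_ne_zero (NeZero.ne d)

lemma madd (x y : ℕ) : (x % d + y % d) % d = (x + y) % d := by
  conv_rhs => rw [Nat.add_mod]

lemma m_inv1 (i : ℕ) (hi : i < d) : (d - (d - i) % d) % d = i := by
  rcases Nat.eq_zero_or_pos i with h | h
  · subst h
    simp [Nat.mod_self]
  · have h1 : (d - i) % d = d - i := Nat.mod_eq_of_lt (by omega)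
    rw [h1, show d - (d - i) = i by omega]
    exact Nat.mod_eq_of_lt hi

lemma m_add_inv' (i x : ℕ) (hi : i < d) (hx : x < d) :
    ((d - i) % d + (x + i) % d) % d = x := by
  rw [Nat.add_comm ((d - i) % d), Nat.add_comm x i]
  rw [madd, show i + x + (d - i) = d + x by omega, Nat.add_mod_left]
  exact Nat.mod_eq_of_lt hx

lemma m_add_inv (i x : ℕ) (hi : i < d) (hx : x < d) :
    ((i + x) % d + (d - i) % d) % d = x := by
  rw [madd, show i + x + (d - i) = d + x by omega, Nat.add_mod_left]
  exact Nat.mod_eq_of_lt hx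

/-! ### The combinatorial core -/

lemma flat (F : ℕ → ℕ → ℕ → Matrix (Fin d × Fin d × Fin d) (Fin d × Fin d × Fin d) ℂ) :
    (∑ i ∈ Finset.range d, ∑ j ∈ Finset.range d, ∑ k ∈ Finset.range d, F i j k)
      = ∑ p ∈ Finset.range d ×ˢ Finset.range d ×ˢ Finset.range d, F p.1 p.2.1 p.2.2 := by
  conv_rhs => rw [Finset.sum_product]
  exact Finset.sum_congr rfl fun i _ =>
    (Finset.sum_product (Finset.range d) (Finset.range d) (fun p => F i p.1 p.2)).symm

lemma core (V W : Matrix (Fin d × Fin d × Fin d) (Fin d × Fin d × Fin d) ℂ)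
    (hV : V ^ d = 1) (hW : W ^ d = 1)
    (hpow : ∀ i j : ℕ, V ^ i * W ^ j = (xi d ^ (2 * i * j)) • (W ^ j * V ^ i)) :
    ∑ i ∈ Finset.range d, ∑ j ∈ Finset.range d, ∑ k ∈ Finset.range d,
        (xi d ^ i ^ 2 * xi d ^ j ^ 2 * xi d ^ k ^ 2) • (V ^ i * W ^ j * V ^ k)
    = ∑ i ∈ Finset.range d, ∑ j ∈ Finset.range d, ∑ k ∈ Finset.range d,
        (xi d ^ i ^ 2 * xi d ^ j ^ 2 * xi d ^ k ^ 2) • (W ^ i * V ^ j * W ^ k) := by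
  have stepL : ∀ i j k : ℕ,
      (xi d ^ i ^ 2 * xi d ^ j ^ 2 * xi d ^ k ^ 2) • (V ^ i * W ^ j * V ^ k)
      = ((xi d ^ i ^ 2 * xi d ^ j ^ 2 * xi d ^ k ^ 2) * xi d ^ (2 * i * j))
          • (W ^ j * V ^ ((i + k) % d)) := by
    intro i j k
    rw [hpow i j, Matrix.smul_mul, smul_smul, mul_assoc (W ^ j) (V ^ i) (V ^ k),
      ← pow_add V i k, pow_mod d V hV (i + k)]
  have stepR : ∀ i j k : ℕ,
      (xi d ^ i ^ 2 * xi d ^ j ^ 2 * xi d ^ k ^ 2) • (W ^ i * V ^ j * W ^ k)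
      = ((xi d ^ i ^ 2 * xi d ^ j ^ 2 * xi d ^ k ^ 2) * xi d ^ (2 * j * k))
          • (W ^ ((i + k) % d) * V ^ j) := by
    intro i j k
    rw [mul_assoc (W ^ i) (V ^ j) (W ^ k), hpow j k, Matrix.mul_smul, smul_smul,
      ← mul_assoc (W ^ i) (W ^ k) (V ^ j), ← pow_add W i k, pow_mod d W hW (i + k)]
  simp only [stepL, stepR]
  rw [flat d (fun i j k => ((xi d ^ i ^ 2 * xi d ^ j ^ 2 * xi d ^ k ^ 2) * xi d ^ (2 * i * j))
        • (W ^ j * V ^ ((i + k) % d))),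
      flat d (fun i j k => ((xi d ^ i ^ 2 * xi d ^ j ^ 2 * xi d ^ k ^ 2) * xi d ^ (2 * j * k))
        • (W ^ ((i + k) % d) * V ^ j))]
  refine Finset.sum_nbij'
    (fun p => ((p.1 + p.2.1) % d, (p.1 + p.2.2) % d, (d - p.1) % d))
    (fun p => ((d - p.2.2) % d, (p.1 + p.2.2) % d, (p.2.1 + p.2.2) % d)) ?_ ?_ ?_ ?_ ?_
  · rintro ⟨i, j, k⟩ hp
    simp only [Finset.mem_product, Finset.mem_range] at hp ⊢
    exact ⟨Nat.mod_lt _ (dpos d), Nat.mod_lt _ (dpos d), Nat.mod_lt _ (dpos d)⟩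
  · rintro ⟨i, j, k⟩ hp
    simp only [Finset.mem_product, Finset.mem_range] at hp ⊢
    exact ⟨Nat.mod_lt _ (dpos d), Nat.mod_lt _ (dpos d), Nat.mod_lt _ (dpos d)⟩
  · rintro ⟨i, j, k⟩ hp
    simp only [Finset.mem_product, Finset.mem_range] at hp
    obtain ⟨hi, hj, hk⟩ := hp
    simp only [Prod.mk.injEq]
    exact ⟨m_inv1 d i hi, m_add_inv d i j hi hj, m_add_inv d i k hi hk⟩
  · rintro ⟨a, b, c⟩ hp
    simp only [Finset.mem_product, Finset.mem_range] at hp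
    obtain ⟨ha, hb, hc⟩ := hp
    simp only [Prod.mk.injEq]
    exact ⟨m_add_inv' d c a hc ha, m_add_inv' d c b hc hb, m_inv1 d c hc⟩
  · rintro ⟨i, j, k⟩ hp
    simp only [Finset.mem_product, Finset.mem_range] at hp
    obtain ⟨hi, hj, hk⟩ := hp
    simp only []
    rw [m_add_inv d i j hi hj]
    congr 1
    rw [← pow_add, ← pow_add, ← pow_add, ← pow_add, ← pow_add, ← pow_add]
    exact (key_coeff d i j k hi hj hk).symm

end GaussYBE

set_option maxHeartbeats 1000000 in
/-- The Gaussian R-matrix `G_d` satisfies the Yang-Baxter equation. -/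
theorem gaussian_YBE (d : ℕ) [NeZero d] (hd : 2 ≤ d) : YBE (Gg d) := by
  open GaussYBE in
  unfold YBE
  have hGg1 : amp1 (Gg d) = ((Real.sqrt d : ℂ))⁻¹ •
      ∑ k ∈ Finset.range d, xi d ^ (k ^ 2) • (amp1 (Ug d)) ^ k := by
    rw [Gg, amp1_smul, amp1_sum]
    congr 1
    refine Finset.sum_congr rfl fun k _ => ?_
    rw [amp1_smul, amp1_pow]
  have hGg2 : amp2 (Gg d) = ((Real.sqrt d : ℂ))⁻¹ •
      ∑ k ∈ Finset.range d, xi d ^ (k ^ 2) • (amp2 (Ug d)) ^ k := by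
    rw [Gg, amp2_smul, amp2_sum]
    congr 1
    refine Finset.sum_congr rfl fun k _ => ?_
    rw [amp2_smul, amp2_pow]
  set V := amp1 (Ug d) with hVdef
  set W := amp2 (Ug d) with hWdef
  have hV : V ^ d = 1 := by rw [hVdef, ← amp1_pow, Ug_pow_d, amp1_one]
  have hW : W ^ d = 1 := by rw [hWdef, ← amp2_pow, Ug_pow_d, amp2_one]
  have h2 : xi d ^ (2 : ℤ) = xi d ^ (2 : ℕ) := by norm_cast
  have hcn : V * W = (xi d ^ (2 : ℕ)) • (W * V) := by
    rw [hVdef, hWdef, comm d hd, h2]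
  have hpow1 : ∀ j : ℕ, V * W ^ j = (xi d ^ (2 * j)) • (W ^ j * V) := by
    intro j
    induction j with
    | zero => simp
    | succ j ih =>
      rw [pow_succ, ← mul_assoc, ih, Matrix.smul_mul, mul_assoc, hcn,
        Matrix.mul_smul, smul_smul, ← pow_add, ← mul_assoc (W ^ j) W V, ← pow_succ]
      ring_nf
  have hpow : ∀ i j : ℕ, V ^ i * W ^ j = (xi d ^ (2 * i * j)) • (W ^ j * V ^ i) := by
    intro i j
    induction i with
    | zero => simp
    | succ i ih =>
      rw [pow_succ, mul_assoc, hpow1 j, Matrix.mul_smul, ← mul_assoc, ih,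
        Matrix.smul_mul, smul_smul, ← pow_add, mul_assoc (W ^ j) (V ^ i) V, ← pow_succ]
      rw [show 2 * j + 2 * i * j = 2 * (i + 1) * j by ring]
  rw [hGg1, hGg2]
  have rearr : ∀ (X Y Z : Matrix (Fin d × Fin d × Fin d) (Fin d × Fin d × Fin d) ℂ)
      (c : ℂ), (c • X) * (c • Y) * (c • Z) = (c * c * c) • (X * Y * Z) := by
    intro X Y Z c
    simp only [Matrix.smul_mul, Matrix.mul_smul, smul_smul]
    congr 1
    ring
  rw [rearr, rearr]
  congr 1
  have expand : ∀ (A B : ℕ → Matrix (Fin d × Fin d × Fin d) (Fin d × Fin d × Fin d) ℂ),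
      (∑ i ∈ Finset.range d, xi d ^ (i ^ 2) • A i) * (∑ j ∈ Finset.range d, xi d ^ (j ^ 2) • B j)
          * (∑ k ∈ Finset.range d, xi d ^ (k ^ 2) • A k)
        = ∑ i ∈ Finset.range d, ∑ j ∈ Finset.range d, ∑ k ∈ Finset.range d,
            (xi d ^ i ^ 2 * xi d ^ j ^ 2 * xi d ^ k ^ 2) • (A i * B j * A k) := by
    intro A B
    rw [Finset.sum_mul, Finset.sum_mul]
    refine Finset.sum_congr rfl fun i _ => ?_
    rw [Finset.mul_sum]
    rw [show (∑ j ∈ Finset.range d, ∑ k ∈ Finset.range d,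
          (xi d ^ i ^ 2 * xi d ^ j ^ 2 * xi d ^ k ^ 2) • (A i * B j * A k))
        = ∑ k ∈ Finset.range d, ∑ j ∈ Finset.range d,
          (xi d ^ i ^ 2 * xi d ^ j ^ 2 * xi d ^ k ^ 2) • (A i * B j * A k)
      from Finset.sum_comm]
    refine Finset.sum_congr rfl fun k _ => ?_
    rw [Finset.mul_sum, Finset.sum_mul]
    refine Finset.sum_congr rfl fun j _ => ?_
    simp only [Matrix.smul_mul, Matrix.mul_smul, smul_smul]
    congr 1
    ring
  rw [expand (fun i => V ^ i) (fun j => W ^ j), expand (fun i => W ^ i) (fun j => V ^ j)]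
  exact core d V W hV hW hpow
end

section
/- The 2-dimensional Gaussian R-matrix G_2 has spectrum {e^{iπ/4}, e^{-iπ/4}}, and the 3-dimensional Gaussian R-matrix G_3 has spectrum {i, e^{-iπ/6}}. -/
open Matrix Kronecker Complex

section aux



lemma exp_real_mul_I (x : ℝ) : Complex.exp (x * I) = (Real.cos x : ℂ) + (Real.sin x : ℂ) * I := by
  rw [Complex.exp_mul_I, ← Complex.ofReal_cos, ← Complex.ofReal_sin]

lemma xi2 : xi 2 = I := by
  have h : (↑Real.pi * I / ((2:ℕ):ℂ) : ℂ) = (↑(Real.pi/2) : ℂ) * I := by push_cast; ring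
  rw [xi, if_neg (by decide), h, exp_real_mul_I, Real.cos_pi_div_two, Real.sin_pi_div_two]
  simp

lemma xi3 : xi 3 = -(1/2 : ℂ) + (Real.sqrt 3 / 2 : ℝ) * I := by
  have h : (2 * ↑Real.pi * I / ((3:ℕ):ℂ) : ℂ) = (↑(Real.pi - Real.pi/3) : ℂ) * I := by push_cast; ring
  rw [xi, if_pos (by decide), h, exp_real_mul_I, Real.cos_pi_sub, Real.sin_pi_sub,
    Real.cos_pi_div_three, Real.sin_pi_div_three]
  push_cast; ring

lemma expa : Complex.exp (Real.pi * Complex.I / 4) = (Real.sqrt 2 / 2 : ℝ) + (Real.sqrt 2 / 2 : ℝ) * I := by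
  have h : (↑Real.pi * I / 4 : ℂ) = (↑(Real.pi/4) : ℂ) * I := by push_cast; ring
  rw [h, exp_real_mul_I, Real.cos_pi_div_four, Real.sin_pi_div_four]

lemma expb : Complex.exp (-(Real.pi * Complex.I) / 4) = (Real.sqrt 2 / 2 : ℝ) - (Real.sqrt 2 / 2 : ℝ) * I := by
  have h : (-(↑Real.pi * I) / 4 : ℂ) = (↑(-(Real.pi/4)) : ℂ) * I := by push_cast; ring
  rw [h, exp_real_mul_I, Real.cos_neg, Real.sin_neg, Real.cos_pi_div_four, Real.sin_pi_div_four]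
  push_cast; ring

lemma expc : Complex.exp (-(Real.pi * Complex.I) / 6) = (Real.sqrt 3 / 2 : ℝ) - (1/2 : ℂ) * I := by
  have h : (-(↑Real.pi * I) / 6 : ℂ) = (↑(-(Real.pi/6)) : ℂ) * I := by push_cast; ring
  rw [h, exp_real_mul_I, Real.cos_neg, Real.sin_neg, Real.cos_pi_div_six, Real.sin_pi_div_six]
  push_cast; ring




lemma U2sq : Ug 2 * Ug 2 = 1 := by
  ext ⟨a,b⟩ ⟨c,d⟩
  simp only [Ug, Matrix.mul_apply, Fintype.sum_prod_type, Fin.sum_univ_two, Matrix.of_apply,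
    Matrix.one_apply, xi2]
  fin_cases a <;> fin_cases b <;> fin_cases c <;> fin_cases d <;>
    simp (config := { decide := true }) [Complex.inv_I]

lemma hr2 : ((Real.sqrt 2 : ℝ) : ℂ) * ((Real.sqrt 2 : ℝ) : ℂ) = 2 := by
  rw [← Complex.ofReal_mul, Real.mul_self_sqrt (by norm_num)]; norm_num

lemma hr2ne : ((Real.sqrt 2 : ℝ) : ℂ) ≠ 0 := by
  simp [Real.sqrt_eq_zero']

lemma G2eq : Gg 2 = ((Real.sqrt 2 : ℝ) : ℂ)⁻¹ • ((1 : MM 2) + I • Ug 2) := by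
  rw [Gg, Finset.sum_range_succ, Finset.sum_range_one]
  norm_num [xi2]

lemma G2quad : Gg 2 * Gg 2 =
    (Complex.exp (Real.pi * Complex.I / 4) + Complex.exp (-(Real.pi * Complex.I) / 4)) • Gg 2
      - (Complex.exp (Real.pi * Complex.I / 4) * Complex.exp (-(Real.pi * Complex.I) / 4)) • 1 := by
  have hsum : Complex.exp (Real.pi * Complex.I / 4) + Complex.exp (-(Real.pi * Complex.I) / 4)
      = ((Real.sqrt 2 : ℝ) : ℂ) := by
    rw [expa, expb]; push_cast; ring
  have hprod : Complex.exp (Real.pi * Complex.I / 4) * Complex.exp (-(Real.pi * Complex.I) / 4)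
      = 1 := by
    rw [expa, expb]
    push_cast
    linear_combination (1/2 : ℂ) * hr2 - ((Real.sqrt 2 : ℝ) : ℂ) * ((Real.sqrt 2 : ℝ) : ℂ) / 4 * Complex.I_sq
  rw [hsum, hprod, G2eq]
  have expand : ((1 : MM 2) + I • Ug 2) * ((1 : MM 2) + I • Ug 2) = (2 * I) • Ug 2 := by
    rw [add_mul, mul_add, mul_add, smul_mul_smul_comm, U2sq, Complex.I_mul_I]
    simp only [one_mul, mul_one]
    module
  rw [smul_mul_smul_comm, expand, smul_smul, smul_smul]
  have h1 : ((Real.sqrt 2 : ℝ) : ℂ)⁻¹ * ((Real.sqrt 2 : ℝ) : ℂ)⁻¹ * (2 * I) = I := by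
    rw [← mul_inv, hr2]; ring
  have h2 : ((Real.sqrt 2 : ℝ) : ℂ) * ((Real.sqrt 2 : ℝ) : ℂ)⁻¹ = 1 :=
    mul_inv_cancel₀ hr2ne
  rw [h1, h2, one_smul]
  module

lemma hsa : Complex.exp (Real.pi * Complex.I / 4) = ((Real.sqrt 2 : ℝ) : ℂ)⁻¹ * (1 + I) := by
  rw [expa]
  field_simp
  push_cast
  linear_combination (1 + I) / 2 * hr2

lemma hsb : Complex.exp (-(Real.pi * Complex.I) / 4) = ((Real.sqrt 2 : ℝ) : ℂ)⁻¹ * (1 - I) := by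
  rw [expb]
  field_simp
  push_cast
  linear_combination (1 - I) / 2 * hr2

lemma eigen2a : ∃ v, v ≠ 0 ∧ Gg 2 *ᵥ v = Complex.exp (Real.pi * Complex.I / 4) • v := by
  refine ⟨fun p => if p.1 = p.2 then 1 else 0, ?_, ?_⟩
  · intro h
    have := congrFun h (0, 0)
    simp at this
  · set v : Fin 2 × Fin 2 → ℂ := fun p => if p.1 = p.2 then 1 else 0 with hv
    have hU : Ug 2 *ᵥ v = v := by
      funext p
      obtain ⟨x, y⟩ := p
      simp only [Matrix.mulVec, dotProduct, Ug, Matrix.of_apply, xi2, hv,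
        Fintype.sum_prod_type, Fin.sum_univ_two]
      fin_cases x <;> fin_cases y <;> simp (config := { decide := true }) [Complex.inv_I]
    rw [G2eq, Matrix.smul_mulVec, Matrix.add_mulVec, Matrix.one_mulVec,
      Matrix.smul_mulVec, hU, hsa]
    have : v + I • v = (1 + I) • v := by module
    rw [this, smul_smul]

lemma eigen2b : ∃ v, v ≠ 0 ∧ Gg 2 *ᵥ v = Complex.exp (-(Real.pi * Complex.I) / 4) • v := by
  refine ⟨fun p => if p = (0,0) then 1 else if p = (1,1) then -1 else 0, ?_, ?_⟩
  · intro h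
    have := congrFun h (0, 0)
    simp at this
  · set v : Fin 2 × Fin 2 → ℂ := fun p => if p = (0,0) then 1 else if p = (1,1) then -1 else 0 with hv
    have hU : Ug 2 *ᵥ v = -v := by
      funext p
      obtain ⟨x, y⟩ := p
      simp only [Matrix.mulVec, dotProduct, Ug, Matrix.of_apply, xi2, hv,
        Fintype.sum_prod_type, Fin.sum_univ_two]
      fin_cases x <;> fin_cases y <;> simp (config := { decide := true }) [Complex.inv_I]
    rw [G2eq, Matrix.smul_mulVec, Matrix.add_mulVec, Matrix.one_mulVec,
      Matrix.smul_mulVec, hU, hsb]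
    have : v + I • (-v) = (1 - I) • v := by module
    rw [this, smul_smul]

lemma hr3 : ((Real.sqrt 3 : ℝ) : ℂ) * ((Real.sqrt 3 : ℝ) : ℂ) = 3 := by
  rw [← Complex.ofReal_mul, Real.mul_self_sqrt (by norm_num)]; norm_num

lemma hr3ne : ((Real.sqrt 3 : ℝ) : ℂ) ≠ 0 := by
  simp [Real.sqrt_eq_zero']

lemma hω3 : xi 3 ^ 3 = 1 := by
  rw [xi, if_pos (by decide), ← Complex.exp_nat_mul]
  rw [show ((3:ℕ) : ℂ) * (2 * (Real.pi:ℂ) * I / ((3:ℕ):ℂ)) = 2 * Real.pi * I by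
    push_cast; ring]
  exact Complex.exp_two_pi_mul_I

lemma hωne : xi 3 ≠ 0 := by
  rw [xi, if_pos (by decide)]; exact Complex.exp_ne_zero _

lemma zm1 : xi 3 ^ (-1 : ℤ) = xi 3 ^ (2 : ℕ) := by
  rw [_root_.zpow_neg, zpow_one]
  exact inv_eq_of_mul_eq_one_right (by linear_combination hω3)

lemma zm2 : xi 3 ^ (-2 : ℤ) = xi 3 := by
  rw [_root_.zpow_neg, show ((2:ℤ)) = ((2:ℕ):ℤ) by norm_num, zpow_natCast]
  exact inv_eq_of_mul_eq_one_right (by linear_combination hω3)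

lemma zi1 : (xi 3)⁻¹ = xi 3 ^ (2:ℕ) :=
  inv_eq_of_mul_eq_one_right (by linear_combination hω3)

lemma zi2 : (xi 3 ^ (2:ℕ))⁻¹ = xi 3 :=
  inv_eq_of_mul_eq_one_right (by linear_combination hω3)

lemma zc2 : xi 3 ^ (2:ℤ) = xi 3 ^ (2:ℕ) := by norm_cast

lemma hUg3 : Ug 3 = Matrix.of (fun p q : Fin 3 × Fin 3 =>
    if p.1 = q.1 + 1 ∧ p.2 = q.2 + 1 then xi 3 ^ ((q.2 + 2 * q.1 : Fin 3) : ℕ) else 0) := by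
  ext ⟨a, b⟩ ⟨c, d⟩
  simp only [Ug, Matrix.of_apply]
  fin_cases c <;> fin_cases d <;>
    simp (config := { decide := true }) [zm1, zm2, zi1, zi2, zc2]

lemma hVV : Ug 3 * Ug 3 = Matrix.of (fun p q : Fin 3 × Fin 3 =>
    if p.1 = q.1 + 2 ∧ p.2 = q.2 + 2 then xi 3 ^ ((2 * q.2 + q.1 : Fin 3) : ℕ) else 0) := by
  rw [hUg3]
  ext ⟨a, b⟩ ⟨c, d⟩
  simp only [Matrix.mul_apply, Matrix.of_apply, Fintype.sum_prod_type, Fin.sum_univ_three]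
  fin_cases a <;> fin_cases b <;> fin_cases c <;> fin_cases d <;>
    simp (config := { decide := true }) [pow_succ] <;>
    first
      | rfl
      | linear_combination hω3
      | linear_combination xi 3 * hω3
      | ring

lemma hV3 : Ug 3 * (Ug 3 * Ug 3) = 1 := by
  rw [hVV, hUg3]
  ext ⟨a, b⟩ ⟨c, d⟩
  simp only [Matrix.mul_apply, Matrix.of_apply, Fintype.sum_prod_type, Fin.sum_univ_three,
    Matrix.one_apply]
  fin_cases a <;> fin_cases b <;> fin_cases c <;> fin_cases d <;>
    simp (config := { decide := true }) [pow_succ] <;>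
    first
      | rfl
      | linear_combination hω3
      | linear_combination xi 3 * hω3
      | ring

lemma G3eq : Gg 3 = ((Real.sqrt 3 : ℝ) : ℂ)⁻¹ •
    ((1 : MM 3) + xi 3 • Ug 3 + xi 3 • (Ug 3 * Ug 3)) := by
  rw [Gg, Finset.sum_range_succ, Finset.sum_range_succ, Finset.sum_range_one]
  have h4 : xi 3 ^ (4:ℕ) = xi 3 := by linear_combination xi 3 * hω3
  norm_num [pow_two]
  rw [h4]

lemma G3quad : Gg 3 * Gg 3 =
    (Complex.I + Complex.exp (-(Real.pi * Complex.I) / 6)) • Gg 3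
      - (Complex.I * Complex.exp (-(Real.pi * Complex.I) / 6)) • 1 := by
  have e1 : Ug 3 * (Ug 3 * Ug 3) = 1 := hV3
  have e2 : (Ug 3 * Ug 3) * Ug 3 = 1 := by rw [mul_assoc]; exact hV3
  have e3 : (Ug 3 * Ug 3) * (Ug 3 * Ug 3) = Ug 3 := by
    rw [mul_assoc, e1, mul_one]
  have expand : ((1 : MM 3) + xi 3 • Ug 3 + xi 3 • (Ug 3 * Ug 3)) *
      ((1 : MM 3) + xi 3 • Ug 3 + xi 3 • (Ug 3 * Ug 3)) =
      (1 + 2 * xi 3 ^ 2) • (1 : MM 3) + (2 * xi 3 + xi 3 ^ 2) • Ug 3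
        + (2 * xi 3 + xi 3 ^ 2) • (Ug 3 * Ug 3) := by
    simp only [add_mul, mul_add, smul_mul_smul_comm, e1, e2, e3]
    simp only [one_mul, mul_one]
    module
  rw [G3eq, smul_mul_smul_comm, expand]
  have hω : xi 3 = -(1/2 : ℂ) + ((Real.sqrt 3 : ℝ) : ℂ)/2 * I := by
    rw [xi3]; push_cast; ring
  have hc : Complex.exp (-(Real.pi * Complex.I) / 6)
      = ((Real.sqrt 3 : ℝ) : ℂ)/2 - (1/2 : ℂ) * I := by
    rw [expc]; push_cast; ring
  have sc1 : (((Real.sqrt 3 : ℝ) : ℂ)⁻¹ * ((Real.sqrt 3 : ℝ) : ℂ)⁻¹) * (1 + 2 * xi 3 ^ 2)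
      = (Complex.I + Complex.exp (-(Real.pi * Complex.I) / 6)) * ((Real.sqrt 3 : ℝ) : ℂ)⁻¹
        - Complex.I * Complex.exp (-(Real.pi * Complex.I) / 6) := by
    rw [hω, hc]
    have hrne := hr3ne
    field_simp
    linear_combination (I*((Real.sqrt 3 : ℝ) : ℂ) - 1) * hr3
  have sc2 : (((Real.sqrt 3 : ℝ) : ℂ)⁻¹ * ((Real.sqrt 3 : ℝ) : ℂ)⁻¹) * (2 * xi 3 + xi 3 ^ 2)
      = (Complex.I + Complex.exp (-(Real.pi * Complex.I) / 6)) * ((Real.sqrt 3 : ℝ) : ℂ)⁻¹ * xi 3 := by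
    rw [hω, hc]
    have hrne := hr3ne
    field_simp
    linear_combination (1 - I*((Real.sqrt 3 : ℝ) : ℂ)) * hr3
  simp only [smul_add, smul_smul]
  rw [sc1, sc2]
  module

lemma eigen3a : ∃ v, v ≠ 0 ∧ Gg 3 *ᵥ v = Complex.I • v := by
  refine ⟨fun p => if p.1 = p.2 then 1 else 0, ?_, ?_⟩
  · intro h
    have := congrFun h (0, 0)
    simp at this
  · set v : Fin 3 × Fin 3 → ℂ := fun p => if p.1 = p.2 then 1 else 0 with hv
    have hU : Ug 3 *ᵥ v = v := by
      funext p
      obtain ⟨x, y⟩ := p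
      simp only [hUg3, Matrix.mulVec, dotProduct, Matrix.of_apply, hv,
        Fintype.sum_prod_type, Fin.sum_univ_three]
      fin_cases x <;> fin_cases y <;> simp (config := { decide := true })
    have hUU : (Ug 3 * Ug 3) *ᵥ v = v := by
      rw [← Matrix.mulVec_mulVec, hU, hU]
    have hsc : ((Real.sqrt 3 : ℝ) : ℂ)⁻¹ * (1 + 2 * xi 3) = Complex.I := by
      rw [show xi 3 = -(1/2 : ℂ) + ((Real.sqrt 3 : ℝ) : ℂ)/2 * I from by rw [xi3]; push_cast; ring]
      have hrne := hr3ne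
      field_simp
      ring
    rw [G3eq, Matrix.smul_mulVec, Matrix.add_mulVec, Matrix.add_mulVec, Matrix.one_mulVec,
      Matrix.smul_mulVec, Matrix.smul_mulVec, hU, hUU]
    have : v + xi 3 • v + xi 3 • v = (1 + 2 * xi 3) • v := by module
    rw [this, smul_smul, hsc]

lemma eigen3b : ∃ v, v ≠ 0 ∧ Gg 3 *ᵥ v = Complex.exp (-(Real.pi * Complex.I) / 6) • v := by
  refine ⟨fun p => if p.2 = p.1 + 1 then 1 else 0, ?_, ?_⟩
  · intro h
    have := congrFun h (0, 1)
    simp at this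
  · set v : Fin 3 × Fin 3 → ℂ := fun p => if p.2 = p.1 + 1 then 1 else 0 with hv
    have hU : Ug 3 *ᵥ v = xi 3 • v := by
      funext p
      obtain ⟨x, y⟩ := p
      simp only [hUg3, Matrix.mulVec, dotProduct, Matrix.of_apply, hv, Pi.smul_apply,
        smul_eq_mul, Fintype.sum_prod_type, Fin.sum_univ_three]
      fin_cases x <;> fin_cases y <;> simp (config := { decide := true })
    have hUU : (Ug 3 * Ug 3) *ᵥ v = xi 3 • xi 3 • v := by
      rw [← Matrix.mulVec_mulVec, hU, Matrix.mulVec_smul, hU]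
    have hsc : ((Real.sqrt 3 : ℝ) : ℂ)⁻¹ * (1 + xi 3 ^ 2 + xi 3 ^ 3)
        = Complex.exp (-(Real.pi * Complex.I) / 6) := by
      rw [show xi 3 = -(1/2 : ℂ) + ((Real.sqrt 3 : ℝ) : ℂ)/2 * I from by rw [xi3]; push_cast; ring,
        show Complex.exp (-(Real.pi * Complex.I) / 6)
          = ((Real.sqrt 3 : ℝ) : ℂ)/2 - (1/2 : ℂ) * I from by rw [expc]; push_cast; ring]
      have hrne := hr3ne
      field_simp
      linear_combination (-3 - ((Real.sqrt 3:ℝ):ℂ)*I) * hr3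
        + (-((Real.sqrt 3:ℝ):ℂ)^2 + ((Real.sqrt 3:ℝ):ℂ)^3*I) * Complex.I_sq
    rw [G3eq, Matrix.smul_mulVec, Matrix.add_mulVec, Matrix.add_mulVec, Matrix.one_mulVec,
      Matrix.smul_mulVec, Matrix.smul_mulVec, hU, hUU]
    have : v + xi 3 • xi 3 • v + xi 3 • xi 3 • xi 3 • v = (1 + xi 3 ^ 2 + xi 3 ^ 3) • v := by
      module
    rw [this, smul_smul, hsc]


lemma spec_pair {d : ℕ} [NeZero d] (g : MM d) (a b : ℂ)
    (hq : g * g = (a + b) • g - (a * b) • 1)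
    (ha : ∃ v, v ≠ 0 ∧ g *ᵥ v = a • v)
    (hb : ∃ v, v ≠ 0 ∧ g *ᵥ v = b • v) :
    spectrum ℂ g = {a, b} := by
  have key : ∀ c : ℂ, (∃ v, v ≠ 0 ∧ g *ᵥ v = c • v) → c ∈ spectrum ℂ g := by
    rintro c ⟨v, hv, hgv⟩
    rw [spectrum.mem_iff]
    intro hu
    rw [Matrix.isUnit_iff_isUnit_det, isUnit_iff_ne_zero] at hu
    apply hu
    rw [← Matrix.exists_mulVec_eq_zero_iff]
    refine ⟨v, hv, ?_⟩
    rw [Matrix.sub_mulVec, hgv, Algebra.algebraMap_eq_smul_one, Matrix.smul_mulVec,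
      Matrix.one_mulVec, sub_self]
  apply Set.eq_of_subset_of_subset
  · intro lam hlam
    have h0 : (Polynomial.aeval g) ((Polynomial.X - Polynomial.C a) * (Polynomial.X - Polynomial.C b)) = 0 := by
      simp only [_root_.map_mul, _root_.map_sub, Polynomial.aeval_X, Polynomial.aeval_C]
      rw [Algebra.algebraMap_eq_smul_one, Algebra.algebraMap_eq_smul_one,
        sub_mul, mul_sub, mul_sub, hq]
      simp only [mul_smul_comm, smul_mul_assoc, mul_one, one_mul, smul_smul]
      module
    have hmem := spectrum.subset_polynomial_aeval g
      ((Polynomial.X - Polynomial.C a) * (Polynomial.X - Polynomial.C b)) ⟨lam, hlam, rfl⟩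
    rw [h0, spectrum.zero_eq] at hmem
    simp only [Polynomial.eval_mul, Polynomial.eval_sub, Polynomial.eval_X, Polynomial.eval_C,
      Set.mem_singleton_iff, mul_eq_zero, sub_eq_zero] at hmem
    rcases hmem with h | h <;> simp [h]
  · intro x hx
    simp only [Set.mem_insert_iff, Set.mem_singleton_iff] at hx
    rcases hx with rfl | rfl
    · exact key _ ha
    · exact key _ hb

end aux

/-- The spectra of the Gaussian R-matrices in dimensions 2 and 3:
`σ(G_2) = {e^{iπ/4}, e^{-iπ/4}}` and `σ(G_3) = {i, e^{-iπ/6}}`. -/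


theorem gaussian_spectrum_dim_two_three :
    spectrum ℂ (Gg 2) =
        {Complex.exp (Real.pi * Complex.I / 4), Complex.exp (-(Real.pi * Complex.I) / 4)} ∧
      spectrum ℂ (Gg 3) = {Complex.I, Complex.exp (-(Real.pi * Complex.I) / 6)} :=
  ⟨spec_pair _ _ _ G2quad eigen2a eigen2b, spec_pair _ _ _ G3quad eigen3a eigen3b⟩
end

section
/- Let q ∈ ℂ, q ≠ -1, and let R be an operator on V⊗V with minimal polynomial dividing (x+1)(x-q), with spectral projection P for eigenvalue -1, so R = -P + q(1-P). Then R satisfies the Yang-Baxter equation on V⊗V⊗V if and only if the projections E_1 = P⊗1 and E_2 = 1⊗P satisfy the Hecke relation E_1E_2E_1 - (q/(1+q)²)E_1 = E_2E_1E_2 - (q/(1+q)²)E_2. -/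
open Matrix Kronecker Complex

lemma amp1_smul {d : ℕ} (a : ℂ) (A : MM d) : amp1 (a • A) = a • amp1 A := by
  ext x y; simp [amp1, mul_assoc]

lemma amp2_smul {d : ℕ} (a : ℂ) (A : MM d) : amp2 (a • A) = a • amp2 A := by
  ext x y; simp [amp2, mul_assoc]

lemma amp1_sub {d : ℕ} (A B : MM d) : amp1 (A - B) = amp1 A - amp1 B := by
  ext x y; simp [amp1, sub_mul]
  split_ifs <;> simp

lemma amp2_sub {d : ℕ} (A B : MM d) : amp2 (A - B) = amp2 A - amp2 B := by
  ext x y; simp [amp2, mul_sub]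

lemma amp1_one {d : ℕ} : amp1 (1 : MM d) = 1 := by
  ext ⟨i, j, k⟩ ⟨i', j', k'⟩
  simp [amp1, Matrix.one_apply, Prod.ext_iff, ite_and, mul_ite, ite_mul]
  split_ifs <;> simp_all

lemma amp2_one {d : ℕ} : amp2 (1 : MM d) = 1 := by
  ext ⟨i, j, k⟩ ⟨i', j', k'⟩
  simp [amp2, Matrix.one_apply, Prod.ext_iff, ite_and, mul_ite, ite_mul]
  split_ifs <;> simp_all

lemma amp1_mul {d : ℕ} (A B : MM d) : amp1 (A * B) = amp1 A * amp1 B := by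
  ext ⟨i, j, k⟩ ⟨i', j', k'⟩
  simp [amp1, Matrix.mul_apply, Fintype.sum_prod_type, mul_ite, ite_mul,
    Finset.sum_ite_eq, Finset.sum_ite_eq', Finset.mul_sum, Finset.sum_mul]

lemma amp2_mul {d : ℕ} (A B : MM d) : amp2 (A * B) = amp2 A * amp2 B := by
  ext ⟨i, j, k⟩ ⟨i', j', k'⟩
  simp [amp2, Matrix.mul_apply, Fintype.sum_prod_type, mul_ite, ite_mul,
    Finset.sum_ite_eq, Finset.sum_ite_eq', Finset.mul_sum, Finset.sum_mul]


/-- For `q ≠ -1` and an idempotent `P` on `V ⊗ V`, the operator `R = -P + q(1-P)`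
satisfies the Yang-Baxter equation if and only if `E₁ = P⊗1`, `E₂ = 1⊗P` satisfy the
Hecke relation `E₁E₂E₁ - (q/(1+q)²)E₁ = E₂E₁E₂ - (q/(1+q)²)E₂`. -/
theorem YBE_iff_Hecke (d : ℕ) (q : ℂ) (hq : q ≠ -1) (P : MM d) (hP : P * P = P) :
    YBE (q • (1 : MM d) - (1 + q) • P) ↔
      amp1 P * amp2 P * amp1 P - (q / (1 + q) ^ 2) • amp1 P =
        amp2 P * amp1 P * amp2 P - (q / (1 + q) ^ 2) • amp2 P := by
  have hc : (1 + q) ≠ 0 := by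
    intro h; apply hq; linear_combination h
  set E1 := amp1 P with hE1def
  set E2 := amp2 P with hE2def
  have hE1 : E1 * E1 = E1 := by rw [hE1def, ← amp1_mul, hP]
  have hE2 : E2 * E2 = E2 := by rw [hE2def, ← amp2_mul, hP]
  have h1 : amp1 (q • (1 : MM d) - (1 + q) • P) = q • 1 - (1 + q) • E1 := by
    rw [amp1_sub, amp1_smul, amp1_smul, amp1_one, hE1def]
  have h2 : amp2 (q • (1 : MM d) - (1 + q) • P) = q • 1 - (1 + q) • E2 := by
    rw [amp2_sub, amp2_smul, amp2_smul, amp2_one, hE2def]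
  have expand :
      (q • 1 - (1 + q) • E1) * (q • 1 - (1 + q) • E2) * (q • 1 - (1 + q) • E1) -
        (q • 1 - (1 + q) • E2) * (q • 1 - (1 + q) • E1) * (q • 1 - (1 + q) • E2) =
      (q * (1 + q)) • (E1 - E2) - ((1 + q) ^ 3) • (E1 * E2 * E1 - E2 * E1 * E2) := by
    simp only [sub_mul, mul_sub, smul_sub, smul_smul, Matrix.mul_smul, Matrix.smul_mul,
      mul_one, one_mul, hE1, hE2]
    module
  rw [YBE, h1, h2, ← sub_eq_zero, expand, sub_eq_zero]
  have hs : q * (1 + q) = (1 + q) ^ 3 * (q / (1 + q) ^ 2) := by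
    field_simp
  have key : (q * (1 + q)) • (E1 - E2) = ((1 + q) ^ 3) • (E1 * E2 * E1 - E2 * E1 * E2) ↔
      (q / (1 + q) ^ 2) • (E1 - E2) = E1 * E2 * E1 - E2 * E1 * E2 := by
    rw [hs, ← smul_smul]
    exact (smul_right_injective _ (pow_ne_zero 3 hc)).eq_iff
  rw [key, smul_sub]
  constructor <;> intro h <;> linear_combination (norm := abel1) -h
end

section
/- Let q ∈ 𝕋, q ≠ ±1, and let P₁ = P⊗1, P₂ = 1⊗P be orthogonal projections on V^{⊗3} coming from a Hecke projection P (i.e. P₁P₂P₁ - xP₁ = P₂P₁P₂ - xP₂ with x = q/(1+q)²) such that the normalized trace τ satisfies the Markov property τ(P₁P₂) = τ(P)². Then the Temperley-Lieb relation P₁P₂P₁ = xP₁ holds if and only if τ(P) = x. -/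
open Matrix Kronecker Complex

/-- The normalized trace on `End(V^{⊗3})`, `V = ℂ^d`. -/
noncomputable def ntr3 {d : ℕ}
    (A : Matrix (Fin d × Fin d × Fin d) (Fin d × Fin d × Fin d) ℂ) : ℂ :=
  Matrix.trace A / (d : ℂ) ^ 3

lemma amp1_ct {d : ℕ} (A : MM d) : (amp1 A)ᴴ = amp1 Aᴴ := by
  ext ⟨a, b, c⟩ ⟨a', b', c'⟩
  simp only [amp1, Matrix.conjTranspose_apply, Matrix.of_apply]
  rcases eq_or_ne c c' with h | h
  · simp [h]
  · simp [h, Ne.symm h]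

lemma amp2_ct {d : ℕ} (A : MM d) : (amp2 A)ᴴ = amp2 Aᴴ := by
  ext ⟨a, b, c⟩ ⟨a', b', c'⟩
  simp only [amp2, Matrix.conjTranspose_apply, Matrix.of_apply]
  rcases eq_or_ne a a' with h | h
  · simp [h]
  · simp [h, Ne.symm h]

lemma trace_ct_mul_self_eq_zero {n : Type*} [Fintype n] [DecidableEq n]
    (A : Matrix n n ℂ) (h : Matrix.trace (Aᴴ * A) = 0) : A = 0 := by
  have key : ∀ i j, A i j = 0 := by
    have h1 : Matrix.trace (Aᴴ * A) =
        ((∑ i, ∑ j, Complex.normSq (A j i) : ℝ) : ℂ) := by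
      simp [Matrix.trace, Matrix.diag, Matrix.mul_apply, Matrix.conjTranspose_apply,
        Complex.normSq_eq_conj_mul_self]
    rw [h1] at h
    have h2 : (∑ i, ∑ j, Complex.normSq (A j i) : ℝ) = 0 := by exact_mod_cast h
    have h3 : ∀ i ∈ Finset.univ, ∀ j ∈ Finset.univ, Complex.normSq (A j i) = 0 := by
      have := (Finset.sum_eq_zero_iff_of_nonneg (fun i _ => Finset.sum_nonneg
        (fun j _ => Complex.normSq_nonneg _))).mp h2
      intro i _ j hj
      exact (Finset.sum_eq_zero_iff_of_nonneg
        (fun j _ => Complex.normSq_nonneg _)).mp (this i (Finset.mem_univ i)) j hj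
    intro i j
    exact Complex.normSq_eq_zero.mp (h3 j (Finset.mem_univ j) i (Finset.mem_univ i))
  ext i j; exact key i j

/-- For a Hecke projection `P` whose normalized trace has the Markov property
`τ(P₁P₂) = τ(P)²`, the Temperley-Lieb relation `P₁P₂P₁ = xP₁` with `x = q/(1+q)²`
holds if and only if `τ(P) = x`. -/
theorem TemperleyLieb_iff_trace (d : ℕ) (q : ℂ) (hq : ‖q‖ = 1)
    (hq1 : q ≠ 1) (hq2 : q ≠ -1) (P : MM d)
    (hidem : P * P = P) (hsa : Pᴴ = P) (hP0 : P ≠ 0)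
    (hHecke : amp1 P * amp2 P * amp1 P - (q / (1 + q) ^ 2) • amp1 P =
      amp2 P * amp1 P * amp2 P - (q / (1 + q) ^ 2) • amp2 P)
    (hMarkov : ntr3 (amp1 P * amp2 P) = ntr3 (amp1 P) * ntr3 (amp1 P)) :
    amp1 P * amp2 P * amp1 P = (q / (1 + q) ^ 2) • amp1 P ↔
      ntr3 (amp1 P) = q / (1 + q) ^ 2 := by
  set x : ℂ := q / (1 + q) ^ 2 with hx
  have hq0 : q ≠ 0 := by intro h; rw [h] at hq; simp at hq
  have h1q : (1 : ℂ) + q ≠ 0 := by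
    intro h; exact hq2 (by linear_combination h)
  have hnsq : Complex.normSq q = 1 := by
    rw [Complex.normSq_eq_norm_sq, hq]; norm_num
  have hqc : (starRingEnd ℂ) q = q⁻¹ := by
    rw [Complex.inv_def, hnsq]; simp
  have h1q' : (1 : ℂ) + q⁻¹ ≠ 0 := by
    intro h; apply h1q; field_simp at h; linear_combination h
  have hxr : star x = x := by
    show (starRingEnd ℂ) x = x
    rw [hx, map_div₀, map_pow, map_add, hqc]
    simp only [_root_.map_one]
    rw [div_eq_div_iff (pow_ne_zero 2 h1q') (pow_ne_zero 2 h1q)]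
    field_simp
    ring
  set P₁ := amp1 P with hP₁
  set P₂ := amp2 P with hP₂
  have hP1 : P₁ * P₁ = P₁ := by rw [hP₁, ← amp1_mul, hidem]
  have hP2 : P₂ * P₂ = P₂ := by rw [hP₂, ← amp2_mul, hidem]
  have hP1sa : P₁ᴴ = P₁ := by rw [hP₁, amp1_ct, hsa]
  have hP2sa : P₂ᴴ = P₂ := by rw [hP₂, amp2_ct, hsa]
  have hPe : ∃ ij kl, P ij kl ≠ 0 := by
    by_contra h; push_neg at h; exact hP0 (by ext i j; exact h i j)
  obtain ⟨⟨i1, i2⟩, ⟨j1, j2⟩, hne⟩ := hPe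
  have hP1ne : P₁ ≠ 0 := by
    intro h0
    have := congrArg (fun M => M (i1, (i2, i1)) (j1, (j2, i1))) h0
    simp [hP₁, amp1] at this
    exact hne this
  have hc : ((d : ℂ) ^ 3) ≠ 0 :=
    pow_ne_zero 3 (Nat.cast_ne_zero.mpr i1.pos.ne')
  set t : ℂ := ntr3 P₁ with ht
  have hntr_smul : ∀ A : Matrix (Fin d × Fin d × Fin d) (Fin d × Fin d × Fin d) ℂ, ntr3 (x • A) = x * ntr3 A := by
    intro A; simp [ntr3, Matrix.trace_smul, mul_div_assoc]
  have h121 : ntr3 (P₁ * P₂ * P₁) = t * t := by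
    have : Matrix.trace (P₁ * P₂ * P₁) = Matrix.trace (P₁ * P₂) := by
      rw [Matrix.trace_mul_comm, ← mul_assoc, hP1]
    rw [ntr3, this, ← ntr3, hMarkov]
  have htrP1 : t ≠ 0 := by
    intro h0
    have htr0 : Matrix.trace P₁ = 0 := by
      have := h0
      rw [ht, ntr3, div_eq_zero_iff] at this
      tauto
    apply hP1ne
    apply trace_ct_mul_self_eq_zero
    rw [hP1sa, hP1, htr0]
  constructor
  · intro h
    have := congrArg ntr3 h
    rw [h121, hntr_smul] at this
    exact mul_right_cancel₀ htrP1 this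
  · intro htx
    set B := P₁ * P₂ * P₁ - x • P₁ with hB
    have hB2 : B = P₂ * P₁ * P₂ - x • P₂ := hHecke
    have hBP1 : B * P₁ = B := by
      rw [hB, sub_mul, Matrix.smul_mul, mul_assoc, hP1]
    have hBP2 : B * P₂ = B := by
      rw [hB2, sub_mul, Matrix.smul_mul, mul_assoc, hP2]
    have hBB : B * B = B - x • B := by
      nth_rewrite 2 [hB]
      rw [mul_sub, Matrix.mul_smul, ← mul_assoc, ← mul_assoc, hBP1, hBP2, hBP1]
    have hBsa : Bᴴ = B := by
      rw [hB]
      simp [Matrix.conjTranspose_sub, Matrix.conjTranspose_smul, Matrix.conjTranspose_mul,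
        hP1sa, hP2sa, hxr, mul_assoc]
    have htrB : Matrix.trace B = 0 := by
      have hn : ntr3 B = 0 := by
        have : ntr3 B = ntr3 (P₁ * P₂ * P₁) - x * t := by
          rw [hB, ntr3, Matrix.trace_sub, Matrix.trace_smul, sub_div, ntr3, ht, ntr3,
            smul_eq_mul, mul_div_assoc]
        rw [this, h121, ← htx]; ring
      rw [ntr3, div_eq_zero_iff] at hn
      tauto
    have htrBB : Matrix.trace (Bᴴ * B) = 0 := by
      rw [hBsa, hBB, Matrix.trace_sub, Matrix.trace_smul, htrB]; simp
    have hB0 : B = 0 := trace_ct_mul_self_eq_zero B htrBB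
    rw [hB, sub_eq_zero] at hB0
    exact hB0
end
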